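/- For each nonincreasing function φ : [1,n] → [1,k], the set S_φ = {v_j : j ∉ im(φ)} ⊔ {x_{i+1} : φ(i) = φ(i+1)} ⊔ {−c_{i,φ(i)} : φ(i−1) > φ(i) or i = 1} ⊔ {c_{i,φ(i)−1} : φ(i+1) < φ(i) or i = n} is a basis of the lattice H. -/

import Mathlib

/-!
The homology lattice `H` of the `(n+k+1)`-punctured sphere:
`H = (ℤx₁ ⊕ ⋯ ⊕ ℤx_{n+1} ⊕ ℤv₁ ⊕ ⋯ ⊕ ℤv_k)/(x₁+⋯+x_{n+1} − v₁−⋯−v_k)`,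
with the classes `c_{i,j} = v_k + ⋯ + v_{j+1} − x₁ − ⋯ − x_i`.
All indices are 1-based, as in the paper.
-/

open Finset

/-- The free abelian group on `x₁,…,x_{n+1},v₁,…,v_k`. -/
abbrev FreeH (n k : ℕ) := (Fin (n + 1) ⊕ Fin k) →₀ ℤ

/-- The generator `xᵢ` (for `1 ≤ i ≤ n+1`) of the free abelian group. -/
noncomputable def XX (n k : ℕ) (i : ℕ) : FreeH n k :=
  if h : 1 ≤ i ∧ i ≤ n + 1 then Finsupp.single (Sum.inl (⟨i - 1, by omega⟩ : Fin (n + 1))) 1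
  else 0

/-- The generator `vⱼ` (for `1 ≤ j ≤ k`) of the free abelian group. -/
noncomputable def VV (n k : ℕ) (j : ℕ) : FreeH n k :=
  if h : 1 ≤ j ∧ j ≤ k then Finsupp.single (Sum.inr (⟨j - 1, by omega⟩ : Fin k)) 1
  else 0

/-- The relation `x₁+⋯+x_{n+1} − (v₁+⋯+v_k)`. -/
noncomputable def relH (n k : ℕ) : FreeH n k :=
  (∑ i ∈ Finset.Icc 1 (n + 1), XX n k i) - (∑ j ∈ Finset.Icc 1 k, VV n k j)

/-- The lattice `H`. -/
abbrev HLat (n k : ℕ) := FreeH n k ⧸ Submodule.span ℤ {relH n k}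

/-- The class `xᵢ ∈ H`. -/
noncomputable def xH (n k i : ℕ) : HLat n k := Submodule.Quotient.mk (XX n k i)

/-- The class `vⱼ ∈ H`. -/
noncomputable def vH (n k j : ℕ) : HLat n k := Submodule.Quotient.mk (VV n k j)

/-- The class `c_{i,j} = v_k + ⋯ + v_{j+1} − x₁ − ⋯ − x_i ∈ H`. -/
noncomputable def cH (n k i j : ℕ) : HLat n k :=
  (∑ j' ∈ Finset.Icc (j + 1) k, vH n k j') - (∑ i' ∈ Finset.Icc 1 i, xH n k i')

/-- The set `S_φ ⊆ H` attached to a nonincreasing function `φ : [1,n] → [1,k]`: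
`S_φ = {v_j : j ∉ im φ} ⊔ {x_{i+1} : φ(i) = φ(i+1)} ⊔
       {−c_{i,φ(i)} : φ(i−1) > φ(i) or i = 1} ⊔ {c_{i,φ(i)−1} : φ(i+1) < φ(i) or i = n}`. -/
def Sphi (n k : ℕ) (φ : ℕ → ℕ) : Set (HLat n k) :=
  {h | (∃ j, 1 ≤ j ∧ j ≤ k ∧ (∀ i, 1 ≤ i → i ≤ n → φ i ≠ j) ∧ h = vH n k j) ∨
       (∃ i, 1 ≤ i ∧ i + 1 ≤ n ∧ φ i = φ (i + 1) ∧ h = xH n k (i + 1)) ∨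
       (∃ i, 1 ≤ i ∧ i ≤ n ∧ (i = 1 ∨ φ i < φ (i - 1)) ∧ h = - cH n k i (φ i)) ∨
       (∃ i, 1 ≤ i ∧ i ≤ n ∧ (i = n ∨ φ (i + 1) < φ i) ∧ h = cH n k i (φ i - 1))}

/-! ### Auxiliary lemmas -/

section MyAux

variable (n k : ℕ)

lemma my_sum_fin_icc {M : Type*} [AddCommMonoid M] (m : ℕ) (f : ℕ → M) :
    ∑ i : Fin m, f ((i : ℕ) + 1) = ∑ i ∈ Icc 1 m, f i := by
  induction m with
  | zero => simp
  | succ m ih =>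
    rw [Fin.sum_univ_castSucc, Finset.sum_Icc_succ_top (by omega) f]
    simp only [Fin.coe_castSucc, Fin.val_last]
    rw [ih]

lemma XX_fin (i : Fin (n + 1)) :
    XX n k ((i : ℕ) + 1) = Finsupp.single (Sum.inl i) 1 := by
  rw [XX, dif_pos ⟨by omega, by omega⟩]
  have h : (⟨(i : ℕ) + 1 - 1, by omega⟩ : Fin (n + 1)) = i := by ext; simp
  rw [h]

lemma VV_fin (j : Fin k) :
    VV n k ((j : ℕ) + 1) = Finsupp.single (Sum.inr j) 1 := by
  rw [VV, dif_pos ⟨by omega, by omega⟩]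
  have h : (⟨(j : ℕ) + 1 - 1, by omega⟩ : Fin k) = j := by ext; simp
  rw [h]

lemma xH_mk (i : Fin (n + 1)) :
    xH n k ((i : ℕ) + 1) = Submodule.Quotient.mk (Finsupp.single (Sum.inl i) 1) := by
  rw [xH, XX_fin]

lemma vH_mk (j : Fin k) :
    vH n k ((j : ℕ) + 1) = Submodule.Quotient.mk (Finsupp.single (Sum.inr j) 1) := by
  rw [vH, VV_fin]

lemma sumXX : ∑ i ∈ Icc 1 (n + 1), XX n k i
    = ∑ i : Fin (n + 1), Finsupp.single (Sum.inl i) (1 : ℤ) := by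
  rw [← my_sum_fin_icc (n + 1) (XX n k)]
  exact Finset.sum_congr rfl fun i _ => XX_fin n k i

lemma sumVV : ∑ j ∈ Icc 1 k, VV n k j
    = ∑ j : Fin k, Finsupp.single (Sum.inr j) (1 : ℤ) := by
  rw [← my_sum_fin_icc k (VV n k)]
  exact Finset.sum_congr rfl fun j _ => VV_fin n k j

lemma hrelsum : ∑ i ∈ Icc 1 (n + 1), xH n k i = ∑ j ∈ Icc 1 k, vH n k j := by
  have h0 : ((Submodule.span ℤ {relH n k}).mkQ (relH n k) : HLat n k) = 0 := by
    rw [Submodule.mkQ_apply, Submodule.Quotient.mk_eq_zero]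
    exact Submodule.mem_span_singleton_self _
  rw [relH, map_sub, map_sum, map_sum, sub_eq_zero] at h0
  simp only [xH, vH, Submodule.mkQ_apply] at h0 ⊢
  exact h0

lemma sum_Icc_bot {M : Type*} [AddCommMonoid M] {a b : ℕ} (h : a ≤ b) (f : ℕ → M) :
    ∑ i ∈ Icc a b, f i = f a + ∑ i ∈ Icc (a + 1) b, f i := by
  have hs : Icc a b = insert a (Icc (a + 1) b) := by
    ext x; simp only [Finset.mem_Icc, Finset.mem_insert]; omega
  rw [hs, Finset.sum_insert (by simp only [Finset.mem_Icc]; omega)]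

lemma cH_pred (i j : ℕ) (h1 : 1 ≤ j) (h2 : j ≤ k) :
    cH n k i (j - 1) = vH n k j + cH n k i j := by
  rw [cH, cH]
  have hj : j - 1 + 1 = j := by omega
  rw [hj, sum_Icc_bot h2 (vH n k)]
  abel

lemma cH_succ (i j : ℕ) : cH n k (i + 1) j = cH n k i j - xH n k (i + 1) := by
  rw [cH, cH, Finset.sum_Icc_succ_top (by omega) (xH n k)]
  abel

lemma xH_top : xH n k (n + 1) = (∑ j ∈ Icc 1 k, vH n k j) - ∑ i ∈ Icc 1 n, xH n k i := by
  have h := hrelsum n k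
  rw [Finset.sum_Icc_succ_top (by omega) (xH n k)] at h
  exact eq_sub_of_add_eq (by rw [add_comm]; exact h)

/-- The maximum of the preimage of `j` under `φ` in `[1,n]`. -/
def imaxF (n : ℕ) (φ : ℕ → ℕ) (j : ℕ) : ℕ :=
  (((Finset.Icc 1 n)).filter (fun i => φ i = j)).sup id

/-- The enumeration of `S_φ` by `Fin n ⊕ Fin k`. -/
noncomputable def efun (n k : ℕ) (φ : ℕ → ℕ) : Fin n ⊕ Fin k → HLat n k :=
  Sum.elim
    (fun i => if 1 ≤ (i : ℕ) ∧ φ (i : ℕ) = φ ((i : ℕ) + 1) then xH n k ((i : ℕ) + 1)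
      else - cH n k ((i : ℕ) + 1) (φ ((i : ℕ) + 1)))
    (fun j => if (((Finset.Icc 1 n)).filter (fun i => φ i = (j : ℕ) + 1)).Nonempty
      then cH n k (imaxF n φ ((j : ℕ) + 1)) (j : ℕ)
      else vH n k ((j : ℕ) + 1))

variable (φ : ℕ → ℕ)

lemma imax_spec {j : ℕ} (h : (((Finset.Icc 1 n)).filter (fun i => φ i = j)).Nonempty) :
    (1 ≤ imaxF n φ j ∧ imaxF n φ j ≤ n ∧ φ (imaxF n φ j) = j) ∧
      ∀ i, 1 ≤ i → i ≤ n → φ i = j → i ≤ imaxF n φ j := by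
  obtain ⟨i, hi, hsup⟩ := Finset.exists_mem_eq_sup _ h id
  have hmem : imaxF n φ j ∈ (Finset.Icc 1 n).filter (fun i => φ i = j) := by
    rw [imaxF, hsup]; exact hi
  simp only [Finset.mem_filter, Finset.mem_Icc] at hmem
  refine ⟨⟨hmem.1.1, hmem.1.2, hmem.2⟩, fun i' h1 h2 h3 => ?_⟩
  exact Finset.le_sup (f := id) (by simp only [Finset.mem_filter, Finset.mem_Icc]; exact ⟨⟨h1, h2⟩, h3⟩)

end MyAux

section MyMain

variable (n k : ℕ) (φ : ℕ → ℕ)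
variable (hmono : ∀ i, 1 ≤ i → i + 1 ≤ n → φ (i + 1) ≤ φ i)
variable (hrange : ∀ i, 1 ≤ i → i ≤ n → 1 ≤ φ i ∧ φ i ≤ k)

include hmono in
lemma hmono' : ∀ a b, 1 ≤ a → a ≤ b → b ≤ n → φ b ≤ φ a := by
  intro a b h1 hab hbn
  induction b, hab using Nat.le_induction with
  | base => exact le_rfl
  | succ b hab ih =>
    exact le_trans (hmono b (by omega) (by omega)) (ih (by omega))

include hmono hrange in
lemma mem_cH : ∀ i, 1 ≤ i → i ≤ n →
    cH n k i (φ i) ∈ Submodule.span ℤ (Set.range (efun n k φ)) := by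
  intro i
  induction i with
  | zero => omega
  | succ i ih =>
    intro h1 h2
    by_cases hi0 : i = 0
    · subst hi0
      have he : efun n k φ (Sum.inl ⟨0, by omega⟩) = - cH n k 1 (φ 1) := by
        simp [efun]
      have : - cH n k 1 (φ 1) ∈ Submodule.span ℤ (Set.range (efun n k φ)) :=
        he ▸ Submodule.subset_span ⟨_, rfl⟩
      simpa using neg_mem this
    · by_cases hphi : φ i = φ (i + 1)
      · have he : efun n k φ (Sum.inl ⟨i, by omega⟩) = xH n k (i + 1) := by
          simp only [efun, Sum.elim_inl]
          rw [if_pos ⟨by omega, hphi⟩]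
        have hx : xH n k (i + 1) ∈ Submodule.span ℤ (Set.range (efun n k φ)) :=
          he ▸ Submodule.subset_span ⟨_, rfl⟩
        rw [cH_succ, ← hphi]
        exact sub_mem (ih (by omega) (by omega)) hx
      · have he : efun n k φ (Sum.inl ⟨i, by omega⟩) = - cH n k (i + 1) (φ (i + 1)) := by
          simp only [efun, Sum.elim_inl]
          rw [if_neg (by rintro ⟨-, h⟩; exact hphi h)]
        have : - cH n k (i + 1) (φ (i + 1)) ∈ Submodule.span ℤ (Set.range (efun n k φ)) :=
          he ▸ Submodule.subset_span ⟨_, rfl⟩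
        simpa using neg_mem this

include hmono hrange in
lemma mem_vH : ∀ j, 1 ≤ j → j ≤ k →
    vH n k j ∈ Submodule.span ℤ (Set.range (efun n k φ)) := by
  intro j h1 h2
  by_cases h : (((Finset.Icc 1 n)).filter (fun i => φ i = j)).Nonempty
  · obtain ⟨⟨hi1, hi2, hiφ⟩, -⟩ := imax_spec n φ h
    set i := imaxF n φ j with hidef
    have he : efun n k φ (Sum.inr ⟨j - 1, by omega⟩) = cH n k i (j - 1) := by
      simp only [efun, Sum.elim_inr]
      have hj1 : ((⟨j - 1, by omega⟩ : Fin k) : ℕ) + 1 = j := by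
        show j - 1 + 1 = j; omega
      simp only [hj1]
      rw [if_pos h]
    have hc : cH n k i (j - 1) ∈ Submodule.span ℤ (Set.range (efun n k φ)) :=
      he ▸ Submodule.subset_span ⟨_, rfl⟩
    have hcj : cH n k i j ∈ Submodule.span ℤ (Set.range (efun n k φ)) := by
      have := mem_cH n k φ hmono hrange i hi1 hi2
      rwa [hiφ] at this
    have hve : vH n k j = cH n k i (j - 1) - cH n k i j := by
      rw [cH_pred n k i j h1 h2]; abel
    rw [hve]
    exact sub_mem hc hcj
  · have he : efun n k φ (Sum.inr ⟨j - 1, by omega⟩) = vH n k j := by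
      simp only [efun, Sum.elim_inr]
      have hj1 : ((⟨j - 1, by omega⟩ : Fin k) : ℕ) + 1 = j := by
        show j - 1 + 1 = j; omega
      simp only [hj1]
      rw [if_neg h]
    exact he ▸ Submodule.subset_span ⟨_, rfl⟩

include hmono hrange in
lemma mem_sumv : ∀ a, 1 ≤ a →
    (∑ j ∈ Icc a k, vH n k j) ∈ Submodule.span ℤ (Set.range (efun n k φ)) := by
  intro a ha
  refine Submodule.sum_mem _ fun j hj => ?_
  rw [Finset.mem_Icc] at hj
  exact mem_vH n k φ hmono hrange j (by omega) hj.2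

include hmono hrange in
lemma mem_sumx : ∀ i, i ≤ n →
    (∑ i' ∈ Icc 1 i, xH n k i') ∈ Submodule.span ℤ (Set.range (efun n k φ)) := by
  intro i hi
  rcases Nat.eq_zero_or_pos i with h0 | h0
  · subst h0; simp
  · have hc := mem_cH n k φ hmono hrange i h0 hi
    have hv := mem_sumv n k φ hmono hrange (φ i + 1) (by omega)
    have : (∑ i' ∈ Icc 1 i, xH n k i')
        = (∑ j' ∈ Icc (φ i + 1) k, vH n k j') - cH n k i (φ i) := by
      rw [cH]; abel
    rw [this]
    exact sub_mem hv hc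

include hmono hrange in
lemma mem_xH : ∀ i, 1 ≤ i → i ≤ n + 1 →
    xH n k i ∈ Submodule.span ℤ (Set.range (efun n k φ)) := by
  intro i h1 h2
  rcases Nat.lt_or_ge i (n + 1) with h | h
  · -- i ≤ n
    have hi : i - 1 + 1 = i := by omega
    have hsp : xH n k i = (∑ i' ∈ Icc 1 i, xH n k i') - ∑ i' ∈ Icc 1 (i - 1), xH n k i' := by
      have := Finset.sum_Icc_succ_top (a := 1) (b := i - 1) (by omega) (xH n k)
      rw [hi] at this
      rw [this]; abel
    rw [hsp]
    exact sub_mem (mem_sumx n k φ hmono hrange i (by omega))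
      (mem_sumx n k φ hmono hrange (i - 1) (by omega))
  · have hi : i = n + 1 := by omega
    subst hi
    rw [xH_top]
    exact sub_mem (mem_sumv n k φ hmono hrange 1 le_rfl)
      (mem_sumx n k φ hmono hrange n le_rfl)

include hmono hrange in
lemma espan : Submodule.span ℤ (Set.range (efun n k φ)) = ⊤ := by
  rw [eq_top_iff]
  rintro z -
  obtain ⟨w, rfl⟩ := Submodule.Quotient.mk_surjective _ z
  induction w using Finsupp.induction_linear with
  | zero => simpa using zero_mem _
  | add f g hf hg =>
    rw [Submodule.Quotient.mk_add]
    exact add_mem hf hg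
  | single a b =>
    have hb : (Finsupp.single a b : FreeH n k) = b • Finsupp.single a 1 := by
      rw [Finsupp.smul_single, smul_eq_mul, mul_one]
    rw [hb, Submodule.Quotient.mk_smul]
    refine Submodule.smul_mem _ _ ?_
    cases a with
    | inl i =>
      rw [← xH_mk]
      exact mem_xH n k φ hmono hrange ((i : ℕ) + 1) (by omega) (by omega)
    | inr j =>
      rw [← vH_mk]
      exact mem_vH n k φ hmono hrange ((j : ℕ) + 1) (by omega) (by omega)

end MyMain

section MyFree

variable (n k : ℕ)

noncomputable def pfun : Fin (n + 1) ⊕ Fin k → ((Fin n ⊕ Fin k) →₀ ℤ) :=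
  Sum.elim
    (fun i => if h : (i : ℕ) < n then Finsupp.single (Sum.inl ⟨(i : ℕ), h⟩) 1
      else (∑ j : Fin k, Finsupp.single (Sum.inr j) 1)
        - ∑ i' : Fin n, Finsupp.single (Sum.inl i') 1)
    (fun j => Finsupp.single (Sum.inr j) 1)

noncomputable def pmap : FreeH n k →ₗ[ℤ] ((Fin n ⊕ Fin k) →₀ ℤ) :=
  Finsupp.linearCombination ℤ (pfun n k)

noncomputable def qfun : Fin n ⊕ Fin k → HLat n k :=
  Sum.elim (fun i : Fin n => xH n k ((i : ℕ) + 1)) (fun j : Fin k => vH n k ((j : ℕ) + 1))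

noncomputable def qmap : ((Fin n ⊕ Fin k) →₀ ℤ) →ₗ[ℤ] HLat n k :=
  Finsupp.linearCombination ℤ (qfun n k)

lemma pmap_single (a : Fin (n + 1) ⊕ Fin k) :
    pmap n k (Finsupp.single a 1) = pfun n k a := by
  rw [pmap, Finsupp.linearCombination_single, one_smul]

lemma qmap_single (a : Fin n ⊕ Fin k) :
    qmap n k (Finsupp.single a 1) = qfun n k a := by
  rw [qmap, Finsupp.linearCombination_single, one_smul]

lemma pmap_rel : pmap n k (relH n k) = 0 := by
  rw [relH, map_sub, map_sum, map_sum]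
  have h1 : ∑ i ∈ Icc 1 (n + 1), pmap n k (XX n k i)
      = ∑ j : Fin k, Finsupp.single (Sum.inr j) (1 : ℤ) := by
    rw [← my_sum_fin_icc (n + 1) (fun i => pmap n k (XX n k i))]
    have h0 : ∀ i : Fin (n + 1), pmap n k (XX n k ((i : ℕ) + 1)) = pfun n k (Sum.inl i) := by
      intro i; rw [XX_fin, pmap_single]
    rw [Finset.sum_congr rfl (fun i _ => h0 i), Fin.sum_univ_castSucc]
    have hcast : ∀ i : Fin n, pfun n k (Sum.inl i.castSucc) = Finsupp.single (Sum.inl i) (1 : ℤ) := by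
      intro i
      simp only [pfun, Sum.elim_inl]
      rw [dif_pos (show ((i.castSucc : Fin (n + 1)) : ℕ) < n from i.isLt)]
      have he : (⟨((i.castSucc : Fin (n + 1)) : ℕ), i.isLt⟩ : Fin n) = i := by ext; simp
      rw [he]
    have hlast : pfun n k (Sum.inl (Fin.last n))
        = (∑ j : Fin k, Finsupp.single (Sum.inr j) (1 : ℤ))
          - ∑ i' : Fin n, Finsupp.single (Sum.inl i') (1 : ℤ) := by
      simp only [pfun, Sum.elim_inl]
      rw [dif_neg (by simp)]
    rw [Finset.sum_congr rfl (fun i _ => hcast i), hlast]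
    abel
  have h2 : ∑ j ∈ Icc 1 k, pmap n k (VV n k j)
      = ∑ j : Fin k, Finsupp.single (Sum.inr j) (1 : ℤ) := by
    rw [← my_sum_fin_icc k (fun j => pmap n k (VV n k j))]
    refine Finset.sum_congr rfl fun j _ => ?_
    rw [VV_fin, pmap_single]
    rfl
  rw [h1, h2, sub_self]

noncomputable def pbar : HLat n k →ₗ[ℤ] ((Fin n ⊕ Fin k) →₀ ℤ) :=
  Submodule.liftQ _ (pmap n k) (by
    rw [Submodule.span_singleton_le_iff_mem, LinearMap.mem_ker]
    exact pmap_rel n k)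

lemma pbar_mk (w : FreeH n k) :
    pbar n k (Submodule.Quotient.mk w) = pmap n k w := rfl

lemma qp (a : Fin (n + 1) ⊕ Fin k) :
    qmap n k (pfun n k a) = Submodule.Quotient.mk (Finsupp.single a 1) := by
  cases a with
  | inl i =>
    by_cases h : (i : ℕ) < n
    · simp only [pfun, Sum.elim_inl]
      rw [dif_pos h, qmap_single]
      have h1 : qfun n k (Sum.inl ⟨(i : ℕ), h⟩) = xH n k ((i : ℕ) + 1) := rfl
      rw [h1, xH_mk]
    · have hn : (i : ℕ) = n := by omega
      simp only [pfun, Sum.elim_inl]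
      rw [dif_neg h, map_sub, map_sum, map_sum]
      have hq1 : ∀ j : Fin k, qmap n k (Finsupp.single (Sum.inr j) 1) = vH n k ((j : ℕ) + 1) :=
        fun j => qmap_single n k _
      have hq2 : ∀ i' : Fin n, qmap n k (Finsupp.single (Sum.inl i') 1) = xH n k ((i' : ℕ) + 1) :=
        fun i' => qmap_single n k _
      rw [Finset.sum_congr rfl fun j _ => hq1 j, Finset.sum_congr rfl fun i' _ => hq2 i']
      rw [my_sum_fin_icc, my_sum_fin_icc, ← xH_top]
      have h2 := xH_mk n k i
      rw [hn] at h2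
      exact h2
  | inr j =>
    simp only [pfun, Sum.elim_inr]
    rw [qmap_single]
    have h1 : qfun n k (Sum.inr j) = vH n k ((j : ℕ) + 1) := rfl
    rw [h1, vH_mk]

lemma hqp_comp : (qmap n k).comp (pbar n k) = LinearMap.id := by
  refine Submodule.linearMap_qext _ (Finsupp.lhom_ext fun a b => ?_)
  have hb : (Finsupp.single a b : FreeH n k) = b • Finsupp.single a 1 := by
    rw [Finsupp.smul_single, smul_eq_mul, mul_one]
  simp only [LinearMap.comp_apply, Submodule.mkQ_apply, LinearMap.id_apply]
  rw [hb, Submodule.Quotient.mk_smul, map_smul, map_smul]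
  congr 1
  rw [pbar_mk, pmap_single, qp]

lemma hpq_comp : (pbar n k).comp (qmap n k) = LinearMap.id := by
  refine Finsupp.lhom_ext fun a b => ?_
  simp only [LinearMap.comp_apply, LinearMap.id_apply]
  rw [qmap, Finsupp.linearCombination_single, map_smul]
  suffices h : pbar n k (qfun n k a) = Finsupp.single a 1 by
    rw [h, Finsupp.smul_single, smul_eq_mul, mul_one]
  cases a with
  | inl i =>
    have h1 : qfun n k (Sum.inl i) = xH n k ((i : ℕ) + 1) := rfl
    have h2 := xH_mk n k ⟨(i : ℕ), by omega⟩
    rw [h1, h2, pbar_mk, pmap_single]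
    simp only [pfun, Sum.elim_inl]
    rw [dif_pos (show ((⟨(i : ℕ), by omega⟩ : Fin (n + 1)) : ℕ) < n from i.isLt)]
  | inr j =>
    have h1 : qfun n k (Sum.inr j) = vH n k ((j : ℕ) + 1) := rfl
    rw [h1, vH_mk, pbar_mk, pmap_single]
    rfl

noncomputable def hequiv : HLat n k ≃ₗ[ℤ] ((Fin n ⊕ Fin k) →₀ ℤ) :=
  LinearEquiv.ofLinear (pbar n k) (qmap n k) (hpq_comp n k) (hqp_comp n k)

end MyFree

section MySet

variable (n k : ℕ) (φ : ℕ → ℕ)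
variable (hmono : ∀ i, 1 ≤ i → i + 1 ≤ n → φ (i + 1) ≤ φ i)
variable (hrange : ∀ i, 1 ≤ i → i ≤ n → 1 ≤ φ i ∧ φ i ≤ k)

include hmono hrange in
lemma hset : Sphi n k φ = Set.range (efun n k φ) := by
  ext h
  simp only [Sphi, Set.mem_setOf_eq, Set.mem_range]
  constructor
  · rintro (⟨j, hj1, hjk, hnot, rfl⟩ | ⟨i, hi1, hin, hphi, rfl⟩ | ⟨i, hi1, hin, hc, rfl⟩ |
      ⟨i, hi1, hin, hc, rfl⟩)
    · -- type A
      refine ⟨Sum.inr ⟨j - 1, by omega⟩, ?_⟩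
      simp only [efun, Sum.elim_inr]
      have hj' : ((⟨j - 1, by omega⟩ : Fin k) : ℕ) + 1 = j := by
        show j - 1 + 1 = j; omega
      simp only [hj']
      rw [if_neg]
      rintro ⟨i, hi⟩
      simp only [Finset.mem_filter, Finset.mem_Icc] at hi
      exact hnot i hi.1.1 hi.1.2 hi.2
    · -- type B
      refine ⟨Sum.inl ⟨i, by omega⟩, ?_⟩
      simp only [efun, Sum.elim_inl]
      have hc2 : 1 ≤ ((⟨i, by omega⟩ : Fin n) : ℕ) ∧
          φ ((⟨i, by omega⟩ : Fin n) : ℕ) = φ (((⟨i, by omega⟩ : Fin n) : ℕ) + 1) := ⟨hi1, hphi⟩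
      rw [if_pos hc2]
    · -- type C
      refine ⟨Sum.inl ⟨i - 1, by omega⟩, ?_⟩
      simp only [efun, Sum.elim_inl]
      have hv1 : ((⟨i - 1, by omega⟩ : Fin n) : ℕ) + 1 = i := by
        show i - 1 + 1 = i; omega
      simp only [hv1]
      rw [if_neg]
      rintro ⟨ha, hb⟩
      have ha' : 1 ≤ i - 1 := ha
      have hb' : φ (i - 1) = φ i := hb
      rcases hc with h1 | h1
      · omega
      · rw [hb'] at h1
        exact lt_irrefl _ h1
    · -- type D
      have hφ := hrange i hi1 hin
      refine ⟨Sum.inr ⟨φ i - 1, by omega⟩, ?_⟩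
      simp only [efun, Sum.elim_inr]
      have hj1 : ((⟨φ i - 1, by omega⟩ : Fin k) : ℕ) + 1 = φ i := by
        show φ i - 1 + 1 = φ i; omega
      simp only [hj1]
      have hne : ((Finset.Icc 1 n).filter (fun i' => φ i' = φ i)).Nonempty :=
        ⟨i, by simp only [Finset.mem_filter, Finset.mem_Icc]; exact ⟨⟨hi1, hin⟩, trivial⟩⟩
      rw [if_pos hne]
      have himax : imaxF n φ (φ i) = i := by
        obtain ⟨⟨hm1, hm2, hm3⟩, hmax⟩ := imax_spec n φ (j := φ i) hne
        have hge : i ≤ imaxF n φ (φ i) := hmax i hi1 hin rfl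
        rcases hc with hc | hc
        · omega
        · by_contra hne2
          have hgt : i + 1 ≤ imaxF n φ (φ i) := by omega
          have hh := hmono' n φ hmono (i + 1) (imaxF n φ (φ i)) (by omega) hgt hm2
          rw [hm3] at hh
          omega
      rw [himax]
  · rintro ⟨a, rfl⟩
    cases a with
    | inl i0 =>
      by_cases hcond : 1 ≤ (i0 : ℕ) ∧ φ (i0 : ℕ) = φ ((i0 : ℕ) + 1)
      · have he : efun n k φ (Sum.inl i0) = xH n k ((i0 : ℕ) + 1) := by
          simp only [efun, Sum.elim_inl]; rw [if_pos hcond]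
        rw [he]
        exact Or.inr (Or.inl ⟨(i0 : ℕ), hcond.1, by omega, hcond.2, rfl⟩)
      · have he : efun n k φ (Sum.inl i0) = - cH n k ((i0 : ℕ) + 1) (φ ((i0 : ℕ) + 1)) := by
          simp only [efun, Sum.elim_inl]; rw [if_neg hcond]
        rw [he]
        refine Or.inr (Or.inr (Or.inl ⟨(i0 : ℕ) + 1, by omega, by omega, ?_, rfl⟩))
        rcases Nat.eq_zero_or_pos (i0 : ℕ) with h0 | h0
        · left; omega
        · right
          have hle := hmono (i0 : ℕ) h0 (by omega)
          have hne : φ (i0 : ℕ) ≠ φ ((i0 : ℕ) + 1) := fun hh => hcond ⟨h0, hh⟩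
          have hsub : (i0 : ℕ) + 1 - 1 = (i0 : ℕ) := by omega
          rw [hsub]
          omega
    | inr j0 =>
      by_cases hcond : ((Finset.Icc 1 n).filter (fun i => φ i = (j0 : ℕ) + 1)).Nonempty
      · obtain ⟨⟨hm1, hm2, hm3⟩, hmax⟩ := imax_spec n φ hcond
        have he : efun n k φ (Sum.inr j0) = cH n k (imaxF n φ ((j0 : ℕ) + 1)) (j0 : ℕ) := by
          simp only [efun, Sum.elim_inr]; rw [if_pos hcond]
        rw [he]
        refine Or.inr (Or.inr (Or.inr ⟨imaxF n φ ((j0 : ℕ) + 1), hm1, hm2, ?_, ?_⟩))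
        · rcases Nat.lt_or_ge (imaxF n φ ((j0 : ℕ) + 1)) n with hlt | hge
          · right
            have hle := hmono _ hm1 (by omega)
            have hne : φ (imaxF n φ ((j0 : ℕ) + 1) + 1) ≠ (j0 : ℕ) + 1 := by
              intro hh
              have := hmax _ (by omega) (by omega) hh
              omega
            omega
          · left; omega
        · rw [hm3]
          norm_num
      · have he : efun n k φ (Sum.inr j0) = vH n k ((j0 : ℕ) + 1) := by
          simp only [efun, Sum.elim_inr]; rw [if_neg hcond]
        rw [he]
        refine Or.inl ⟨(j0 : ℕ) + 1, by omega, by omega, ?_, rfl⟩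
        intro i hi1 hi2 hh
        exact hcond ⟨i, by simp only [Finset.mem_filter, Finset.mem_Icc]; exact ⟨⟨hi1, hi2⟩, hh⟩⟩

end MySet


/-!
STATEMENT 3: For each nonincreasing function `φ : [1,n] → [1,k]`, the set `S_φ` is a
basis of the lattice `H`, i.e. it spans `H` over `ℤ` and is linearly independent.
-/
theorem stmt_3 (n k : ℕ) (φ : ℕ → ℕ)
    (hmono : ∀ i, 1 ≤ i → i + 1 ≤ n → φ (i + 1) ≤ φ i)
    (hrange : ∀ i, 1 ≤ i → i ≤ n → 1 ≤ φ i ∧ φ i ≤ k) :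
    Submodule.span ℤ (Sphi n k φ) = ⊤ ∧
    LinearIndependent ℤ (fun s : Sphi n k φ => (s : HLat n k)) := by
  have hspan := espan n k φ hmono hrange
  have hSet := hset n k φ hmono hrange
  have hsurj : Function.Surjective (Finsupp.linearCombination ℤ (efun n k φ)) := by
    rw [← LinearMap.range_eq_top, Finsupp.range_linearCombination, hspan]
  have hendo : Function.Surjective
      ((hequiv n k).toLinearMap ∘ₗ Finsupp.linearCombination ℤ (efun n k φ)) := by
    rw [LinearMap.coe_comp]
    exact (hequiv n k).surjective.comp hsurj
  haveI : IsNoetherian ℤ ((Fin n ⊕ Fin k) →₀ ℤ) := inferInstance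
  have hinj := IsNoetherian.injective_of_surjective_endomorphism _ hendo
  rw [LinearMap.coe_comp] at hinj
  have hinjf : Function.Injective (Finsupp.linearCombination ℤ (efun n k φ)) :=
    Function.Injective.of_comp hinj
  have hLI : LinearIndependent ℤ (efun n k φ) :=
    hinjf
  constructor
  · rw [hSet]
    exact hspan
  · rw [hSet]
    exact (linearIndepOn_id_range_iff hLI.injective).mpr hLI
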